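/- For every p ∈ (0, (3-√5)/2), the integer N minimizing N ↦ t^(D)(N,p) = 1 - (1-p)^N + (1 - p(1-p)^(N-1))/N over positive integers lies in {⌊1/√p⌋, ⌊1/√p⌋ + 1}. -/

import Mathlib

open Filter

private lemma psi_ge_one (s t : ℝ) (hs0 : 0 < s) (hs1 : s < 1) (ht1 : t ≤ 1) (ht2 : 1 - s < t)
    (hcut : 0 < 1 - 3*s^2 + s^4) :
    1 ≤ (1 - t*s)*((1-s^2)*(t+s)^2 + t*s + 2*s^2) := by
  have hv0 : 0 < t - 1 + s := by linarith
  have hvs : t - 1 + s ≤ s := by linarith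
  set v : ℝ := t - 1 + s with hv
  have hid : (1 - t*s)*((1-s^2)*(t+s)^2 + t*s + 2*s^2) - 1
      = s^3 + v*(2 - s - 5*s^2 + s^3 + s^4)
        + v*(v - s)*((1 - 3*s - s^2 + 3*s^3 - s^4) + (-s + s^3)*(v+s)) := by
    rw [hv]; ring
  have hc3 : (-s + s^3 : ℝ) ≤ 0 := by nlinarith
  rcases le_or_gt ((1 - 3*s - s^2 + 3*s^3 - s^4) + (-s + s^3)*(v+s)) 0 with hw | hw
  · have hterm : 0 ≤ v*(v - s)*((1 - 3*s - s^2 + 3*s^3 - s^4) + (-s + s^3)*(v+s)) := by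
      nlinarith [mul_nonneg (mul_nonneg hv0.le (sub_nonneg.2 hvs)) (neg_nonneg.2 hw)]
    rcases le_or_gt 0 (2 - s - 5*s^2 + s^3 + s^4) with hd | hd
    · nlinarith [mul_nonneg hv0.le hd, pow_pos hs0 3]
    · have hvd : s*(2 - s - 5*s^2 + s^3 + s^4) ≤ v*(2 - s - 5*s^2 + s^3 + s^4) :=
        mul_le_mul_of_nonpos_right hvs hd.le
      have hsd : 0 < s^3 + s*(2 - s - 5*s^2 + s^3 + s^4) := by
        nlinarith [mul_pos hs0 hcut,
          mul_pos (mul_pos hs0 (mul_pos (sub_pos.2 hs1) (sub_pos.2 hs1)))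
            (by linarith : (0:ℝ) < 1 + s)]
      linarith
  · have hwb : (1 - 3*s - s^2 + 3*s^3 - s^4) + (-s + s^3)*(v+s)
        ≤ (1 - 3*s - s^2 + 3*s^3 - s^4) + (-s + s^3)*s := by
      nlinarith [mul_nonneg hv0.le (neg_nonneg.2 hc3)]
    have hterm : -(v*s)*((1 - 3*s - s^2 + 3*s^3 - s^4) + (-s + s^3)*s)
        ≤ v*(v - s)*((1 - 3*s - s^2 + 3*s^3 - s^4) + (-s + s^3)*(v+s)) := by
      nlinarith [mul_nonneg (mul_nonneg hv0.le hv0.le) hw.le,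
        mul_nonneg (mul_nonneg hv0.le hs0.le) (sub_nonneg.2 hwb)]
    have hc1 : 0 ≤ 2 - 2*s - 2*s^2 + 3*s^3 - 2*s^4 := by
      nlinarith [mul_pos (sub_pos.2 hs1) (by nlinarith : (0:ℝ) < 1 - s + 3*s^3)]
    nlinarith [mul_nonneg hv0.le hc1, pow_pos hs0 3]

private lemma B_key (p : ℝ) (hp0 : 0 < p) (hpc : p < (3 - Real.sqrt 5)/2) (k : ℕ)
    (hk : (k:ℝ) ≤ 1/Real.sqrt p) (hk' : 1/Real.sqrt p < (k:ℝ)+1) :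
    1 ≤ p*(1-p)^k*((1-p)*((k:ℝ)+1)^2 + ((k:ℝ)+1) + 1) := by
  have h5 : Real.sqrt 5 ^ 2 = 5 := Real.sq_sqrt (by norm_num)
  have h5' : (0:ℝ) ≤ Real.sqrt 5 := Real.sqrt_nonneg 5
  have h52 : 2 < Real.sqrt 5 := by nlinarith
  have hp1 : p < 1/2 := by nlinarith
  have hs0 : 0 < Real.sqrt p := Real.sqrt_pos.2 hp0
  have hs2 : Real.sqrt p ^ 2 = p := Real.sq_sqrt hp0.le
  set s : ℝ := Real.sqrt p with hs
  have hs1 : s < 1 := by nlinarith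
  have hcut : 0 < 1 - 3*s^2 + s^4 := by nlinarith
  have hts : (k:ℝ)*s ≤ 1 := by
    have := mul_le_mul_of_nonneg_right hk hs0.le
    rwa [one_div, inv_mul_cancel₀ hs0.ne'] at this
  have ht2 : 1 - s < (k:ℝ)*s := by
    have := mul_lt_mul_of_pos_right hk' hs0
    rw [one_div, inv_mul_cancel₀ hs0.ne'] at this
    nlinarith
  have hbern : 1 - ((k:ℝ)*s)*s ≤ (1-p)^k := by
    have h := one_add_mul_le_pow (a := -p) (by linarith) k
    have h2 : (1:ℝ) + (k:ℝ)*(-p) = 1 - ((k:ℝ)*s)*s := by rw [← hs2]; ring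
    rw [h2] at h
    simpa [sub_eq_add_neg] using h
  have key : p*((1-p)*((k:ℝ)+1)^2 + ((k:ℝ)+1) + 1)
      = (1-s^2)*((k:ℝ)*s+s)^2 + ((k:ℝ)*s)*s + 2*s^2 := by rw [← hs2]; ring
  have hbrpos : (0:ℝ) < p*((1-p)*((k:ℝ)+1)^2 + ((k:ℝ)+1) + 1) := by
    have hk0 : (0:ℝ) ≤ (k:ℝ) := Nat.cast_nonneg k
    nlinarith
  have hpsi := psi_ge_one s ((k:ℝ)*s) hs0 hs1 hts ht2 hcut
  calc (1:ℝ) ≤ (1 - ((k:ℝ)*s)*s)*((1-s^2)*((k:ℝ)*s+s)^2 + ((k:ℝ)*s)*s + 2*s^2) := hpsi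
    _ = (1 - ((k:ℝ)*s)*s) * (p*((1-p)*((k:ℝ)+1)^2 + ((k:ℝ)+1) + 1)) := by rw [key]
    _ ≤ (1-p)^k * (p*((1-p)*((k:ℝ)+1)^2 + ((k:ℝ)+1) + 1)) :=
        mul_le_mul_of_nonneg_right hbern hbrpos.le
    _ = p*(1-p)^k*((1-p)*((k:ℝ)+1)^2 + ((k:ℝ)+1) + 1) := by ring

private lemma ratio_step_real (p x : ℝ) (hp0 : 0 < p) (hp1 : p < 1) (hx : 0 ≤ x)
    (h : (1-p)*((1-p)*(x+2)^2+(x+2)+1) ≤ (1-p)*(x+1)^2+(x+1)+1) :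
    (1-p)*((1-p)*(x+3)^2+(x+3)+1) ≤ (1-p)*(x+2)^2+(x+2)+1 := by
  have hq : (0:ℝ) < 1 - p := by linarith
  have hu0 : (0:ℝ) < (1-p)*(x+1)^2+(x+1)+1 := by nlinarith [sq_nonneg (x+1)]
  have hu1 : (0:ℝ) < (1-p)*(x+2)^2+(x+2)+1 := by nlinarith [sq_nonneg (x+2)]
  have hlc : ((1-p)*(x+1)^2+(x+1)+1) * ((1-p)*(x+3)^2+(x+3)+1)
      ≤ ((1-p)*(x+2)^2+(x+2)+1)^2 := by
    nlinarith [mul_nonneg hq.le hx, mul_nonneg (mul_nonneg hq.le hq.le) hx,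
      mul_nonneg (mul_nonneg (mul_nonneg hq.le hq.le) hx) hx, sq_nonneg (1-p)]
  have h2 : ((1-p)*((1-p)*(x+3)^2+(x+3)+1)) * ((1-p)*(x+1)^2+(x+1)+1)
      ≤ ((1-p)*(x+2)^2+(x+2)+1) * ((1-p)*(x+1)^2+(x+1)+1) := by
    have ha := mul_le_mul_of_nonneg_left hlc hq.le
    have hb := mul_le_mul_of_nonneg_right h hu1.le
    nlinarith [ha, hb]
  exact le_of_mul_le_mul_right h2 hu0

private lemma chain_down (f : ℕ → ℝ) (c : ℕ) (h : ∀ N, N+1 ≤ c → f (N+1) ≤ f N) :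
    ∀ M b, M ≤ b → b ≤ c → f b ≤ f M := by
  intro M b hMb
  induction b, hMb using Nat.le_induction with
  | base => intro _; exact le_rfl
  | succ n hn ih => intro hc; exact (h n hc).trans (ih (by omega))

private lemma chain_up_bdd (f : ℕ → ℝ) (a c : ℕ) (h : ∀ N, a ≤ N → N+1 ≤ c → f N ≤ f (N+1)) :
    ∀ M, a ≤ M → M ≤ c → f a ≤ f M := by
  intro M hM
  induction M, hM using Nat.le_induction with
  | base => intro _; exact le_rfl
  | succ n hn ih => intro hc; exact (ih (by omega)).trans (h n hn hc)

private lemma chain_up (f : ℕ → ℝ) (a : ℕ) (h : ∀ N, a ≤ N → f N ≤ f (N+1)) :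
    ∀ M, a ≤ M → f a ≤ f M := by
  intro M hM
  induction M, hM using Nat.le_induction with
  | base => exact le_rfl
  | succ n hn ih => exact ih.trans (h n hn)

private lemma chain_dec (f : ℕ → ℝ) (a : ℕ) (h : ∀ N, a ≤ N → f (N+1) ≤ f N) :
    ∀ M, a ≤ M → f M ≤ f a := by
  intro M hM
  induction M, hM using Nat.le_induction with
  | base => exact le_rfl
  | succ n hn ih => exact (h n hn).trans ih

set_option maxHeartbeats 2000000 in
theorem stmt_14 (p : ℝ) (hp : p ∈ Set.Ioo (0:ℝ) ((3 - Real.sqrt 5) / 2)) :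
    ∀ tD : ℕ → ℝ,
      (∀ N, tD N = 1 - (1 - p) ^ N + (1 - p * (1 - p) ^ (N - 1)) / (N : ℝ)) →
    ∃ N : ℕ, 0 < N ∧ (∀ M : ℕ, 0 < M → tD N ≤ tD M) ∧
      (N = ⌊1 / Real.sqrt p⌋₊ ∨ N = ⌊1 / Real.sqrt p⌋₊ + 1) := by
  classical
  obtain ⟨hp0, hpc⟩ := hp
  intro tD htD
  have h5 : Real.sqrt 5 ^ 2 = 5 := Real.sq_sqrt (by norm_num)
  have h5' : (0:ℝ) ≤ Real.sqrt 5 := Real.sqrt_nonneg 5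
  have h52 : 2 < Real.sqrt 5 := by nlinarith
  have hp1 : p < 1/2 := by nlinarith
  have hq0 : (0:ℝ) < 1 - p := by linarith
  have hs0 : 0 < Real.sqrt p := Real.sqrt_pos.2 hp0
  have hs2 : Real.sqrt p ^ 2 = p := Real.sq_sqrt hp0.le
  have hs1 : Real.sqrt p < 1 := by nlinarith
  set k := ⌊1 / Real.sqrt p⌋₊ with hkdef
  have hinv1 : (1:ℝ) ≤ 1/Real.sqrt p := by rw [le_div_iff₀ hs0]; linarith
  have hk1 : 1 ≤ k := Nat.le_floor (by exact_mod_cast hinv1)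
  have hkle : (k:ℝ) ≤ 1/Real.sqrt p := Nat.floor_le (by positivity)
  have hklt : 1/Real.sqrt p < (k:ℝ)+1 := by
    have := Nat.lt_floor_add_one (1/Real.sqrt p)
    push_cast at this
    exact this
  -- the discrete "derivative" driver
  set g : ℕ → ℝ := fun m => p*(1-p)^m*((1-p)*((m:ℝ)+1)^2 + ((m:ℝ)+1) + 1) with hg
  have hdiff : ∀ m : ℕ, tD (m+2) - tD (m+1) = (g m - 1)/(((m:ℝ)+1)*((m:ℝ)+2)) := by
    intro m
    rw [htD (m+2), htD (m+1)]
    rw [show m+2-1 = m+1 from rfl, show m+1-1 = m from rfl]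
    have h1 : ((m:ℝ)+1) ≠ 0 := by positivity
    have h2 : ((m:ℝ)+2) ≠ 0 := by positivity
    simp only [hg]
    push_cast
    field_simp
    ring
  have hstep_le : ∀ m : ℕ, g m ≤ 1 → tD (m+2) ≤ tD (m+1) := by
    intro m hm
    have hd : (0:ℝ) < ((m:ℝ)+1)*((m:ℝ)+2) := by positivity
    have := hdiff m
    have hnp : (g m - 1)/(((m:ℝ)+1)*((m:ℝ)+2)) ≤ 0 :=
      div_nonpos_of_nonpos_of_nonneg (by linarith) hd.le
    linarith
  have hstep_ge : ∀ m : ℕ, 1 ≤ g m → tD (m+1) ≤ tD (m+2) := by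
    intro m hm
    have hd : (0:ℝ) < ((m:ℝ)+1)*((m:ℝ)+2) := by positivity
    have := hdiff m
    have hnp : 0 ≤ (g m - 1)/(((m:ℝ)+1)*((m:ℝ)+2)) :=
      div_nonneg (by linarith) hd.le
    linarith
  -- front decrease : g m ≤ 1 when m+2 ≤ k
  have hA : ∀ m : ℕ, ((m:ℝ)+2) ≤ 1/Real.sqrt p → g m ≤ 1 := by
    intro m hm
    have hm0 : (0:ℝ) ≤ (m:ℝ) := Nat.cast_nonneg m
    have hsm : Real.sqrt p * ((m:ℝ)+2) ≤ 1 := by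
      have := mul_le_mul_of_nonneg_left hm hs0.le
      rwa [one_div, mul_inv_cancel₀ hs0.ne'] at this
    have hp2 : p * ((m:ℝ)+2)^2 ≤ 1 := by
      have hsq := mul_le_mul hsm hsm (mul_nonneg hs0.le (by linarith : (0:ℝ) ≤ (m:ℝ)+2)) zero_le_one
      nlinarith [hsq, hs2]
    have hq1 : (1-p)^m ≤ 1 := pow_le_one₀ hq0.le (by linarith)
    have hqn : (0:ℝ) ≤ (1-p)^m := (pow_pos hq0 m).le
    have hu0 : (0:ℝ) ≤ (1-p)*((m:ℝ)+1)^2 + ((m:ℝ)+1) + 1 := by nlinarith [sq_nonneg ((m:ℝ)+1)]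
    have hu2 : (1-p)*((m:ℝ)+1)^2 + ((m:ℝ)+1) + 1 ≤ ((m:ℝ)+2)^2 := by
      nlinarith [sq_nonneg ((m:ℝ)+1)]
    have h1 : p*(1-p)^m*((1-p)*((m:ℝ)+1)^2 + ((m:ℝ)+1) + 1)
        ≤ p*((1-p)*((m:ℝ)+1)^2 + ((m:ℝ)+1) + 1) := by
      nlinarith [mul_nonneg (mul_nonneg hp0.le hu0) (by linarith : (0:ℝ) ≤ 1 - (1-p)^m)]
    have h2 : p*((1-p)*((m:ℝ)+1)^2 + ((m:ℝ)+1) + 1) ≤ p*((m:ℝ)+2)^2 :=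
      mul_le_mul_of_nonneg_left hu2 hp0.le
    simp only [hg]
    linarith
  -- key lemma : 1 ≤ g k
  have hBkey : 1 ≤ g k := by
    simp only [hg]
    exact B_key p hp0 hpc k hkle hklt
  -- ratio step on g
  have hgsucc : ∀ m : ℕ, g (m+1) = p*(1-p)^m * ((1-p)*((1-p)*((m:ℝ)+2)^2+((m:ℝ)+2)+1)) := by
    intro m
    simp only [hg]
    push_cast
    rw [pow_succ]
    ring
  have hratio : ∀ m : ℕ, g (m+1) ≤ g m → g (m+2) ≤ g (m+1) := by
    intro m hm
    have hpq : (0:ℝ) < p*(1-p)^m := mul_pos hp0 (pow_pos hq0 m)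
    have hm' : (1-p)*((1-p)*((m:ℝ)+2)^2+((m:ℝ)+2)+1) ≤ (1-p)*((m:ℝ)+1)^2+((m:ℝ)+1)+1 := by
      have h1 := hm
      rw [hgsucc m] at h1
      have h2 : g m = p*(1-p)^m * ((1-p)*((m:ℝ)+1)^2+((m:ℝ)+1)+1) := by
        simp only [hg]
      rw [h2] at h1
      exact le_of_mul_le_mul_left h1 hpq
    have hout := ratio_step_real p (m:ℝ) hp0 (by linarith) (Nat.cast_nonneg m) hm'
    rw [hgsucc (m+1), hgsucc m]
    push_cast
    have hpq1 : (0:ℝ) < p*(1-p)^(m+1) := mul_pos hp0 (pow_pos hq0 (m+1))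
    have e1 : p*(1-p)^(m+1) * ((1-p)*((1-p)*(((m:ℝ)+1)+2)^2+(((m:ℝ)+1)+2)+1))
        = (p*(1-p)^m) * ((1-p) * ((1-p)*((1-p)*((m:ℝ)+3)^2+((m:ℝ)+3)+1))) := by
      rw [pow_succ]; ring
    have e2 : p*(1-p)^m * ((1-p)*((1-p)*((m:ℝ)+2)^2+((m:ℝ)+2)+1))
        = (p*(1-p)^m) * ((1-p) * ((1-p)*((m:ℝ)+2)^2+((m:ℝ)+2)+1)) := by ring
    rw [e1, e2]
    apply mul_le_mul_of_nonneg_left _ hpq.le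
    exact mul_le_mul_of_nonneg_left hout hq0.le
  -- limit of tD
  have hlim : Tendsto tD atTop (nhds 1) := by
    have h1 : Tendsto (fun N : ℕ => (1-p)^N) atTop (nhds 0) :=
      tendsto_pow_atTop_nhds_zero_of_lt_one (by linarith) (by linarith)
    have hnum : ∀ N : ℕ, (0:ℝ) ≤ 1 - p*(1-p)^(N-1) ∧ 1 - p*(1-p)^(N-1) ≤ 1 := by
      intro N
      have hb : (1-p)^(N-1) ≤ 1 := pow_le_one₀ hq0.le (by linarith)
      have hbn : (0:ℝ) ≤ (1-p)^(N-1) := (pow_pos hq0 _).le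
      constructor <;> nlinarith
    have hlb : ∀ N : ℕ, (0:ℝ) ≤ (1 - p*(1-p)^(N-1))/(N:ℝ) :=
      fun N => div_nonneg (hnum N).1 (Nat.cast_nonneg N)
    have hub : ∀ N : ℕ, (1 - p*(1-p)^(N-1))/(N:ℝ) ≤ 1/(N:ℝ) := by
      intro N
      exact div_le_div_of_nonneg_right (hnum N).2 (Nat.cast_nonneg N)
    have h2 : Tendsto (fun N : ℕ => (1 - p*(1-p)^(N-1))/(N:ℝ)) atTop (nhds 0) :=
      tendsto_of_tendsto_of_tendsto_of_le_of_le tendsto_const_nhds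
        tendsto_one_div_atTop_nhds_zero_nat hlb hub
    have h3 : Tendsto (fun N : ℕ => 1 - (1-p)^N + (1 - p*(1-p)^(N-1))/(N:ℝ)) atTop
        (nhds (1 - 0 + 0)) := (tendsto_const_nhds.sub h1).add h2
    have he : tD = fun N : ℕ => 1 - (1-p)^N + (1 - p*(1-p)^(N-1))/(N:ℝ) := funext htD
    rw [he]
    simpa using h3
  -- front chain: tD k ≤ tD M for 1 ≤ M ≤ k
  have hfront : ∀ M, 1 ≤ M → M ≤ k → tD k ≤ tD M := by
    intro M hM1 hMk
    have hchain := chain_down (fun m => tD (m+1)) (k-1)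
      (fun N hN => hstep_le N (hA N (by
        have hNk : ((N+2:ℕ):ℝ) ≤ (k:ℝ) := by exact_mod_cast (by omega : N+2 ≤ k)
        push_cast at hNk
        linarith [hkle]))) (M-1) (k-1) (by omega) le_rfl
    simpa only [Nat.sub_add_cancel hk1, Nat.sub_add_cancel hM1] using hchain
  have htD1 : tD 1 = 1 := by rw [htD 1]; norm_num
  have htDk1 : tD k ≤ 1 := by
    have := hfront 1 le_rfl hk1
    linarith
  -- behavior beyond k+1
  have hup : ∀ M, k+1 ≤ M → min (tD k) (tD (k+1)) ≤ tD M := by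
    intro M hM
    by_cases hex : ∃ m, k ≤ m ∧ g m < 1
    · have hN₀spec := Nat.find_spec hex
      set N₀ := Nat.find hex with hN₀def
      obtain ⟨hN₀k, hgN₀⟩ := hN₀spec
      have hN₀ne : k < N₀ := by
        rcases Nat.lt_or_ge k N₀ with h | h
        · exact h
        · exfalso
          have heq : N₀ = k := le_antisymm h hN₀k
          rw [heq] at hgN₀
          linarith [hBkey]
      have hge : ∀ m, k ≤ m → m < N₀ → 1 ≤ g m := by
        intro m hkm hmN
        by_contra hcon
        exact Nat.find_min hex hmN ⟨hkm, by linarith⟩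
      rcases le_or_gt M (N₀+1) with hMN | hMN
      · have hchain := chain_up_bdd (fun m => tD (m+1)) k N₀
          (fun N hN hNlt => hstep_ge N (hge N hN (by omega))) (M-1) (by omega) (by omega)
        have hΔ : tD (k+1) ≤ tD M := by
          simpa only [Nat.sub_add_cancel (show 1 ≤ M by omega)] using hchain
        exact (min_le_right _ _).trans hΔ
      · obtain ⟨N₁, hN₁⟩ := Nat.exists_eq_add_of_le (show 1 ≤ N₀ by omega)
        have hbase : g (N₁+1) ≤ g N₁ := by
          have h1 : 1 ≤ g N₁ := hge N₁ (by omega) (by omega)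
          have h2 : g (N₁+1) < 1 := by
            have := hgN₀
            rw [show N₀ = N₁+1 by omega] at this
            exact this
          linarith
        have hind : ∀ N, N₁ ≤ N → g (N+1) ≤ g N := by
          intro N hN
          induction N, hN using Nat.le_induction with
          | base => exact hbase
          | succ n hn ih => exact hratio n ih
        have hgdec : ∀ N, N₀ ≤ N → g (N+1) ≤ g N := fun N hN => hind N (by omega)
        have hglt : ∀ N, N₀ ≤ N → g N < 1 := by
          intro N hN
          induction N, hN using Nat.le_induction with
          | base => exact hgN₀
          | succ n hn ih => exact lt_of_le_of_lt (hgdec n hn) ih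
        have h1le : 1 ≤ tD M := by
          have hev : ∀ᶠ b in atTop, tD b ≤ tD M := by
            rw [eventually_atTop]
            refine ⟨M, fun b hb => ?_⟩
            have hchain := chain_dec (fun m => tD (m+1)) (M-1)
              (fun N hN => hstep_le N (hglt N (by omega)).le) (b-1) (by omega)
            simpa only [Nat.sub_add_cancel (show 1 ≤ b by omega),
              Nat.sub_add_cancel (show 1 ≤ M by omega)] using hchain
          exact le_of_tendsto hlim hev
        exact (min_le_left _ _).trans (by linarith)
    · push_neg at hex
      have hchain := chain_up (fun m => tD (m+1)) k
        (fun N hN => hstep_ge N (hex N hN)) (M-1) (by omega)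
      have hΔ : tD (k+1) ≤ tD M := by
        simpa only [Nat.sub_add_cancel (show 1 ≤ M by omega)] using hchain
      exact (min_le_right _ _).trans hΔ
  have hmain : ∀ M, 0 < M → min (tD k) (tD (k+1)) ≤ tD M := by
    intro M hM
    rcases le_or_gt M k with h | h
    · exact (min_le_left _ _).trans (hfront M hM h)
    · exact hup M h
  rcases le_total (tD k) (tD (k+1)) with hc | hc
  · exact ⟨k, by omega, fun M hM => by simpa [min_eq_left hc] using hmain M hM, Or.inl rfl⟩
  · exact ⟨k+1, by omega, fun M hM => by simpa [min_eq_right hc] using hmain M hM, Or.inr rfl⟩
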